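/- Let Z₁,…,Zₙ be independent real random variables, each bounded above by b > 0 and square-integrable, and let λ > 0. Then log E[exp(λ Σᵢ Zᵢ)] ≤ λ Σᵢ E[Zᵢ] + (λ²φ(λb)/2) Σᵢ E[Zᵢ²], where φ(u) = 2(e^u − 1 − u)/u², φ(0) = 1. -/

import Mathlib

open MeasureTheory ProbabilityTheory

noncomputable def phi (u : ℝ) : ℝ := if u = 0 then 1 else 2 * (Real.exp u - 1 - u) / u ^ 2

lemma phi_repr (u : ℝ) :
    Real.exp u - 1 - u = u ^ 2 * ∫ t in (0:ℝ)..1, (1 - t) * Real.exp (t * u) := by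
  rcases eq_or_ne u 0 with rfl | hu
  · simp
  · have hderiv : ∀ t ∈ Set.uIcc (0:ℝ) 1,
        HasDerivAt (fun t => Real.exp (t * u) * ((1 - t) / u + 1 / u ^ 2))
          ((1 - t) * Real.exp (t * u)) t := by
      intro t _
      have hinner : HasDerivAt (fun t : ℝ => t * u) u t := by
        simpa using (hasDerivAt_id t).mul_const u
      have h1 : HasDerivAt (fun t : ℝ => Real.exp (t * u)) (Real.exp (t * u) * u) t :=
        hinner.exp
      have h2 : HasDerivAt (fun t : ℝ => (1 - t) / u + 1 / u ^ 2) (-1 / u) t := by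
        have := (((hasDerivAt_id t).const_sub 1).div_const u).add_const (1 / u ^ 2)
        exact this
      have : HasDerivAt (fun t => Real.exp (t * u) * ((1 - t) / u + 1 / u ^ 2)) _ t := h1.mul h2
      convert this using 1
      field_simp
      ring
    have hcont : Continuous fun t : ℝ => (1 - t) * Real.exp (t * u) := by fun_prop
    rw [intervalIntegral.integral_eq_sub_of_hasDerivAt hderiv
      (hcont.intervalIntegrable 0 1)]
    field_simp
    simp only [mul_zero, Real.exp_zero]
    ring

lemma integral_mono_aux {u c : ℝ} (h : u ≤ c) :
    (∫ t in (0:ℝ)..1, (1 - t) * Real.exp (t * u)) ≤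
      ∫ t in (0:ℝ)..1, (1 - t) * Real.exp (t * c) := by
  refine intervalIntegral.integral_mono_on zero_le_one
    ((by fun_prop : Continuous fun t : ℝ => (1 - t) * Real.exp (t * u)).intervalIntegrable 0 1)
    ((by fun_prop : Continuous fun t : ℝ => (1 - t) * Real.exp (t * c)).intervalIntegrable 0 1)
    fun t ht => ?_
  exact mul_le_mul_of_nonneg_left
    (Real.exp_le_exp.2 (mul_le_mul_of_nonneg_left h ht.1)) (by linarith [ht.2])

lemma exp_le_quad {u c : ℝ} (h : u ≤ c) (hc : c ≠ 0) :
    Real.exp u ≤ 1 + u + u ^ 2 * phi c / 2 := by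
  have hru := phi_repr u
  have hrc := phi_repr c
  have hm := mul_le_mul_of_nonneg_left (integral_mono_aux h) (sq_nonneg u)
  have hphi : phi c = 2 * (Real.exp c - 1 - c) / c ^ 2 := if_neg hc
  have hc2 : (c : ℝ) ^ 2 ≠ 0 := pow_ne_zero _ hc
  have hIc : phi c = 2 * ∫ t in (0:ℝ)..1, (1 - t) * Real.exp (t * c) := by
    rw [hphi, hrc]
    field_simp
  rw [hIc]
  nlinarith [sq_nonneg u]

lemma single_mgf_le {Ω : Type*} [MeasurableSpace Ω] (μ : Measure Ω) [IsProbabilityMeasure μ]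
    (X : Ω → ℝ) (hm : Measurable X) {b lam : ℝ} (hb : 0 < b) (hlam : 0 < lam)
    (hbd : ∀ᵐ ω ∂μ, X ω ≤ b) (hint2 : Integrable (fun ω => X ω ^ 2) μ) :
    ∫ ω, Real.exp (lam * X ω) ∂μ ≤
      Real.exp (lam * ∫ ω, X ω ∂μ + lam ^ 2 * phi (lam * b) / 2 * ∫ ω, X ω ^ 2 ∂μ) := by
  have hXi : Integrable X μ :=
    ((memLp_two_iff_integrable_sq hm.aestronglyMeasurable).2 hint2).integrable (by norm_num)
  have hexp_int : Integrable (fun ω => Real.exp (lam * X ω)) μ := by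
    refine Integrable.mono' (integrable_const (Real.exp (lam * b)))
      ((hm.const_mul lam).exp.aestronglyMeasurable) ?_
    filter_upwards [hbd] with ω h
    rw [Real.norm_eq_abs, abs_of_pos (Real.exp_pos _)]
    exact Real.exp_le_exp.2 (mul_le_mul_of_nonneg_left h hlam.le)
  have hcne : lam * b ≠ 0 := (mul_pos hlam hb).ne'
  have key : ∀ᵐ ω ∂μ, Real.exp (lam * X ω) ≤
      1 + lam * X ω + lam ^ 2 * phi (lam * b) / 2 * X ω ^ 2 := by
    filter_upwards [hbd] with ω h
    have := exp_le_quad (mul_le_mul_of_nonneg_left h hlam.le) hcne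
    calc Real.exp (lam * X ω) ≤ 1 + lam * X ω + (lam * X ω) ^ 2 * phi (lam * b) / 2 := this
      _ = 1 + lam * X ω + lam ^ 2 * phi (lam * b) / 2 * X ω ^ 2 := by ring
  have hrhs_int : Integrable (fun ω => 1 + lam * X ω + lam ^ 2 * phi (lam * b) / 2 * X ω ^ 2) μ :=
    ((integrable_const (1:ℝ)).add (hXi.const_mul lam)).add (hint2.const_mul _)
  have h1 : ∫ ω, Real.exp (lam * X ω) ∂μ ≤
      ∫ ω, (1 + lam * X ω + lam ^ 2 * phi (lam * b) / 2 * X ω ^ 2) ∂μ :=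
    integral_mono_ae hexp_int hrhs_int key
  have hA : Integrable (fun ω => 1 + lam * X ω) μ := by
    exact (integrable_const (1:ℝ)).add (hXi.const_mul lam)
  have h2 : ∫ ω, (1 + lam * X ω + lam ^ 2 * phi (lam * b) / 2 * X ω ^ 2) ∂μ =
      1 + (lam * ∫ ω, X ω ∂μ + lam ^ 2 * phi (lam * b) / 2 * ∫ ω, X ω ^ 2 ∂μ) := by
    rw [integral_add hA (hint2.const_mul _),
      integral_add (integrable_const (1:ℝ)) (hXi.const_mul lam),
      integral_const, integral_const_mul, integral_const_mul]
    simp [add_assoc]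
  have h3 := Real.add_one_le_exp
    (lam * ∫ ω, X ω ∂μ + lam ^ 2 * phi (lam * b) / 2 * ∫ ω, X ω ^ 2 ∂μ)
  rw [h2] at h1
  linarith

/-- For independent random variables `Z₁,…,Zₙ` bounded above by `b > 0` and
square-integrable, and `λ > 0`:
`log E[exp(λΣZᵢ)] ≤ λΣE[Zᵢ] + (λ²φ(λb)/2)ΣE[Zᵢ²]`. -/
theorem stmt19 {Ω : Type*} [MeasurableSpace Ω] (μ : Measure Ω) [IsProbabilityMeasure μ]
    (n : ℕ) (Z : Fin n → Ω → ℝ)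
    (hmeas : ∀ i, Measurable (Z i))
    (hindep : iIndepFun Z μ)
    (b : ℝ) (hb : 0 < b) (hbd : ∀ i, ∀ᵐ ω ∂μ, Z i ω ≤ b)
    (hint2 : ∀ i, Integrable (fun ω => (Z i ω) ^ 2) μ)
    (lam : ℝ) (hlam : 0 < lam) :
    Real.log (∫ ω, Real.exp (lam * ∑ i, Z i ω) ∂μ) ≤
      lam * ∑ i, ∫ ω, Z i ω ∂μ +
        lam ^ 2 * phi (lam * b) / 2 * ∑ i, ∫ ω, (Z i ω) ^ 2 ∂μ := by
  have hexp_int : ∀ i, Integrable (fun ω => Real.exp (lam * Z i ω)) μ := by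
    intro i
    refine Integrable.mono' (integrable_const (Real.exp (lam * b)))
      (((hmeas i).const_mul lam).exp.aestronglyMeasurable) ?_
    filter_upwards [hbd i] with ω h
    rw [Real.norm_eq_abs, abs_of_pos (Real.exp_pos _)]
    exact Real.exp_le_exp.2 (mul_le_mul_of_nonneg_left h hlam.le)
  have hmgf_pos : ∀ i, 0 < mgf (Z i) μ lam := fun i =>
    mgf_pos' (IsProbabilityMeasure.ne_zero μ) (hexp_int i)
  have hsum : ∫ ω, Real.exp (lam * ∑ i, Z i ω) ∂μ = ∏ i, mgf (Z i) μ lam := by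
    rw [← hindep.mgf_sum hmeas Finset.univ]
    simp only [mgf, Finset.sum_apply]
  rw [hsum]
  have hle : (∏ i, mgf (Z i) μ lam) ≤
      Real.exp (∑ i, (lam * ∫ ω, Z i ω ∂μ + lam ^ 2 * phi (lam * b) / 2 * ∫ ω, Z i ω ^ 2 ∂μ)) := by
    rw [Real.exp_sum]
    exact Finset.prod_le_prod (fun i _ => mgf_nonneg)
      (fun i _ => single_mgf_le μ (Z i) (hmeas i) hb hlam (hbd i) (hint2 i))
  have hpos : 0 < ∏ i, mgf (Z i) μ lam := Finset.prod_pos fun i _ => hmgf_pos i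
  calc Real.log (∏ i, mgf (Z i) μ lam)
      ≤ Real.log (Real.exp (∑ i, (lam * ∫ ω, Z i ω ∂μ +
          lam ^ 2 * phi (lam * b) / 2 * ∫ ω, Z i ω ^ 2 ∂μ))) := Real.log_le_log hpos hle
    _ = ∑ i, (lam * ∫ ω, Z i ω ∂μ + lam ^ 2 * phi (lam * b) / 2 * ∫ ω, Z i ω ^ 2 ∂μ) :=
        Real.log_exp _
    _ = lam * ∑ i, ∫ ω, Z i ω ∂μ + lam ^ 2 * phi (lam * b) / 2 * ∑ i, ∫ ω, Z i ω ^ 2 ∂μ := by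
        rw [Finset.sum_add_distrib, ← Finset.mul_sum, ← Finset.mul_sum]
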